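/- arXiv:1710.05619 — 3 statements merged into one kernel-verified Lean document; each statement's English description precedes it below -/
import Mathlib

section
/- Let G be a simple graph and let C be a cycle of G containing consecutive vertices w, v, x, y, z, u. Let a and c be two distinct vertices of G not on C such that a is adjacent to v and z, and c is adjacent to x and u. Then G contains a cycle of length |C| + 2 whose vertex set is V(C) ∪ {a, c}; the new cycle is obtained from C by replacing the path (w, v, x, y, z, u) with the path (w, v, a, z, y, x, c, u). -/
open SimpleGraph Walk

private lemma exists_decomp {V : Type*} {G : SimpleGraph V} {s t y : V}
    (P : G.Walk s t) (hx : s ∉ P.support.tail) (he : s(s, y) ∈ P.edges) :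
    ∃ (h : G.Adj s y) (Q : G.Walk y t), P = SimpleGraph.Walk.cons h Q := by
  cases P with
  | nil => simp at he
  | cons h q =>
    rw [SimpleGraph.Walk.edges_cons, List.mem_cons] at he
    rcases he with he | he
    · rw [Sym2.eq_iff] at he
      rcases he with ⟨-, rfl⟩ | ⟨rfl, rfl⟩
      · exact ⟨h, q, rfl⟩
      · exact absurd rfl h.ne
    · exact absurd (q.fst_mem_support_of_mem_edges he) (by simpa using hx)

private lemma sym2_ne_of_ne {α : Type*} {a b c d : α} (h1 : a ≠ c ∨ b ≠ d)
    (h2 : a ≠ d ∨ b ≠ c) : s(a, b) ≠ s(c, d) := by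
  rw [Ne, Sym2.eq_iff]
  rintro (⟨rfl, rfl⟩ | ⟨rfl, rfl⟩) <;> tauto

private lemma mem_tail_of_mem_cons_edges {V : Type*} {G : SimpleGraph V} {s t p q b : V}
    {h : G.Adj s b} {P : G.Walk b t} (hmem : s(p, q) ∈ (Walk.cons h P).edges)
    (hne : s(p, q) ≠ s(s, b)) : s(p, q) ∈ P.edges := by
  rw [SimpleGraph.Walk.edges_cons, List.mem_cons] at hmem
  tauto

private lemma end_mem_tail {V : Type*} {G : SimpleGraph V} {s t : V} (P : G.Walk s t)
    (h : P.length ≠ 0) : t ∈ P.support.tail := by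
  cases P with
  | nil => simp at h
  | cons h q => simpa using q.end_mem_support

private lemma isCycle_reverse {V : Type*} {G : SimpleGraph V} {v : V} {D : G.Walk v v}
    (h : D.IsCycle) : D.reverse.IsCycle := by
  refine ⟨⟨h.isTrail.reverse, ?_⟩, ?_⟩
  · intro hnil
    apply h.ne_nil
    have := congrArg SimpleGraph.Walk.length hnil
    rw [SimpleGraph.Walk.length_reverse] at this
    cases D with
    | nil => rfl
    | cons h q => simp at this
  · have hT : D.support.tail ≠ [] := by
      cases D with
      | nil => exact absurd rfl h.ne_nil
      | cons h q => simp
    have hlast : D.support.tail.getLast hT = v := by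
      rw [List.getLast_tail]
      exact D.getLast_support
    have hdecomp : D.support.tail = D.support.tail.dropLast ++ [v] := by
      conv_lhs => rw [← List.dropLast_append_getLast hT, hlast]
    rw [SimpleGraph.Walk.support_reverse, SimpleGraph.Walk.support_eq_cons, hdecomp]
    have hnd : (D.support.tail.dropLast ++ [v]).Nodup := hdecomp ▸ h.support_nodup
    have heq : ((v :: (D.support.tail.dropLast ++ [v])).reverse).tail
        = D.support.tail.dropLast.reverse ++ [v] := by simp
    rw [heq]
    have hperm : (D.support.tail.dropLast ++ [v]).Perm
        (D.support.tail.dropLast.reverse ++ [v]) :=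
      ((List.reverse_perm _).symm).append_right _
    exact hperm.nodup hnd

set_option maxHeartbeats 2000000 in
/-- Case 3b replacement: if `w, v, x, y, z, u` are consecutive vertices of a cycle `C` and
`a ≠ c` are vertices off `C` with `a` adjacent to `v, z` and `c` adjacent to `x, u`,
then `G` has a cycle of length `|C| + 2` on vertex set `V(C) ∪ {a, c}`, obtained from `C`
by replacing the path `(w, v, x, y, z, u)` with the path `(w, v, a, z, y, x, c, u)`. -/
theorem case3b_replacement {V : Type*} (G : SimpleGraph V) {v0 : V}
    (C : G.Walk v0 v0) (hC : C.IsCycle) (w v x y z u a c : V)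
    (hdist : [w, v, x, y, z, u].Pairwise (· ≠ ·))
    (hwv : s(w, v) ∈ C.edges) (hvx : s(v, x) ∈ C.edges) (hxy : s(x, y) ∈ C.edges)
    (hyz : s(y, z) ∈ C.edges) (hzu : s(z, u) ∈ C.edges)
    (hac : a ≠ c) (ha : a ∉ C.support) (hc : c ∉ C.support)
    (hav : G.Adj a v) (haz : G.Adj a z) (hcx : G.Adj c x) (hcu : G.Adj c u) :
    ∃ (w0 : V) (C' : G.Walk w0 w0), C'.IsCycle ∧ C'.length = C.length + 2 ∧
      (∀ t, t ∈ C'.support ↔ t ∈ C.support ∨ t = a ∨ t = c) ∧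
      {e | e ∈ C'.edges} =
        ({e | e ∈ C.edges} \ {s(w, v), s(v, x), s(x, y), s(y, z), s(z, u)}) ∪
          {s(w, v), s(v, a), s(a, z), s(z, y), s(y, x), s(x, c), s(c, u)} := by
  simp only [List.pairwise_cons, List.mem_cons, List.mem_singleton, List.not_mem_nil,
    forall_eq_or_imp, forall_eq, List.Pairwise.nil, and_true, IsEmpty.forall_iff,
    implies_true] at hdist
  obtain ⟨⟨hwv', hwx, hwy, hwz, hwu⟩, ⟨hvx', hvy, hvz, hvu⟩, ⟨hxy', hxz, hxu⟩,
    ⟨hyz', hyu⟩, hzu'⟩ := hdist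
  -- rotate the cycle to start at `v`
  have hvC : v ∈ C.support := C.snd_mem_support_of_mem_edges hwv
  classical
  obtain ⟨D, hD, hED, hSD, hLD⟩ :
      ∃ D : G.Walk v v, D.IsCycle ∧ (∀ e, e ∈ D.edges ↔ e ∈ C.edges) ∧
        (∀ t, t ∈ D.support ↔ t ∈ C.support) ∧ D.length = C.length := by
    have hlen : (C.rotate v hvC).length = C.length := by
      have := (C.rotate_edges v hvC).perm.length_eq
      rwa [length_edges, length_edges] at this
    have h2 : C.length ≠ 0 := by have := hC.three_le_length; omega
    refine ⟨C.rotate v hvC, hC.rotate hvC, fun e => (C.rotate_edges v hvC).mem_iff,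
      fun t => ?_, hlen⟩
    have h1 : (C.rotate v hvC).length ≠ 0 := by rw [hlen]; exact h2
    rw [(C.rotate v hvC).support_eq_cons, C.support_eq_cons]
    have hv1 : v ∈ (C.rotate v hvC).support.tail := end_mem_tail _ h1
    have hv2 : v0 ∈ C.support.tail := end_mem_tail _ h2
    have hmem := (support_rotate C v hvC).perm.mem_iff (a := t)
    simp only [List.mem_cons]
    constructor
    · rintro (rfl | h) ; · exact Or.inr (hmem.mp hv1)
      · exact Or.inr (hmem.mp h)
    · rintro (rfl | h) ; · exact Or.inr (hmem.mpr hv2)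
      · exact Or.inr (hmem.mpr h)
  -- orient it so its second vertex is `x`
  obtain ⟨D, hD, hED, hSD, hLD, h1, p1, rfl⟩ :
      ∃ D : G.Walk v v, D.IsCycle ∧ (∀ e, e ∈ D.edges ↔ e ∈ C.edges) ∧
        (∀ t, t ∈ D.support ↔ t ∈ C.support) ∧ D.length = C.length ∧
        ∃ (h1 : G.Adj v x) (p1 : G.Walk x v), D = Walk.cons h1 p1 := by
    cases hDeq : D with
    | nil => exact absurd hDeq hD.ne_nil
    | cons h p =>
      subst hDeq
      rename_i b
      by_cases hb : b = x
      · subst hb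
        exact ⟨Walk.cons h p, hD, hED, hSD, hLD, h, p, rfl⟩
      · -- the edge `s(v,x)` lies in `p`; decompose `p.reverse`
        have h' : s(v, x) ∈ p.edges :=
          mem_tail_of_mem_cons_edges ((hED _).mpr hvx)
            (sym2_ne_of_ne (Or.inr (Ne.symm hb)) (Or.inl h.ne))
        have hnd : p.reverse.support.Nodup := by
          rw [support_reverse, List.nodup_reverse]
          simpa using hD.support_nodup
        have hvt : v ∉ p.reverse.support.tail := by
          have := p.reverse.support_eq_cons ▸ hnd
          exact (List.nodup_cons.mp this).1
        have he' : s(v, x) ∈ p.reverse.edges := by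
          rw [edges_reverse, List.mem_reverse]; exact h'
        obtain ⟨h1, q, hq⟩ := exists_decomp p.reverse hvt he'
        refine ⟨(Walk.cons h p).reverse, isCycle_reverse hD, ?_, ?_,
          by rw [length_reverse]; exact hLD, h1,
          q.append (Walk.cons h.symm Walk.nil), ?_⟩
        · intro e; rw [edges_reverse, List.mem_reverse]; exact hED e
        · intro t; rw [support_reverse, List.mem_reverse]; exact hSD t
        · rw [reverse_cons, hq]; rfl
  -- peel off the path x - y - z - u
  have hnd1 : p1.support.Nodup := by simpa using hD.support_nodup
  have hDe : (Walk.cons h1 p1).edges = s(v, x) :: p1.edges := rfl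
  have hmemxy : s(x, y) ∈ p1.edges :=
    mem_tail_of_mem_cons_edges ((hED _).mpr hxy)
      (sym2_ne_of_ne (Or.inl (Ne.symm hvx')) (Or.inr (Ne.symm hvy)))
  obtain ⟨h2, p2, hp2⟩ := exists_decomp p1
    ((List.nodup_cons.mp (p1.support_eq_cons ▸ hnd1)).1) hmemxy
  subst hp2
  have hnd2 : p2.support.Nodup := by
    rw [support_cons] at hnd1; exact (List.nodup_cons.mp hnd1).2
  have hmemyz : s(y, z) ∈ p2.edges :=
    mem_tail_of_mem_cons_edges
      (mem_tail_of_mem_cons_edges ((hED _).mpr hyz)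
        (sym2_ne_of_ne (Or.inl (Ne.symm hvy)) (Or.inl (Ne.symm hxy'))))
      (sym2_ne_of_ne (Or.inl (Ne.symm hxy')) (Or.inr (Ne.symm hxz)))
  obtain ⟨h3, p3, hp3⟩ := exists_decomp p2
    ((List.nodup_cons.mp (p2.support_eq_cons ▸ hnd2)).1) hmemyz
  subst hp3
  have hnd3 : p3.support.Nodup := by
    rw [support_cons] at hnd2; exact (List.nodup_cons.mp hnd2).2
  have hmemzu : s(z, u) ∈ p3.edges :=
    mem_tail_of_mem_cons_edges
      (mem_tail_of_mem_cons_edges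
        (mem_tail_of_mem_cons_edges ((hED _).mpr hzu)
          (sym2_ne_of_ne (Or.inl (Ne.symm hvz)) (Or.inl (Ne.symm hxz))))
        (sym2_ne_of_ne (Or.inl (Ne.symm hxz)) (Or.inl (Ne.symm hyz'))))
      (sym2_ne_of_ne (Or.inl (Ne.symm hyz')) (Or.inr (Ne.symm hyu)))
  obtain ⟨h4, p4, hp4⟩ := exists_decomp p3
    ((List.nodup_cons.mp (p3.support_eq_cons ▸ hnd3)).1) hmemzu
  subst hp4
  have hnd4 : p4.support.Nodup := by
    rw [support_cons] at hnd3; exact (List.nodup_cons.mp hnd3).2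
  -- decompose `p4 : Walk u v` from the back: last edge is `s(w, v)`
  have hmemwv : s(w, v) ∈ p4.edges :=
    mem_tail_of_mem_cons_edges
      (mem_tail_of_mem_cons_edges
        (mem_tail_of_mem_cons_edges
          (mem_tail_of_mem_cons_edges ((hED _).mpr hwv)
            (sym2_ne_of_ne (Or.inl hwv') (Or.inl hwx)))
          (sym2_ne_of_ne (Or.inl hwx) (Or.inl hwy)))
        (sym2_ne_of_ne (Or.inl hwy) (Or.inl hwz)))
      (sym2_ne_of_ne (Or.inl hwz) (Or.inl hwu))
  have hnd4r : p4.reverse.support.Nodup := by rw [support_reverse]; exact (List.nodup_reverse.mpr hnd4)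
  obtain ⟨h5, R, hR⟩ := exists_decomp p4.reverse
    ((List.nodup_cons.mp (p4.reverse.support_eq_cons ▸ hnd4r)).1)
    (by rw [edges_reverse, List.mem_reverse, Sym2.eq_swap]; exact hmemwv)
  have hp4 : p4 = (R.reverse).concat h5.symm := by
    rw [concat_eq_append, ← reverse_cons (h := h5), ← hR, reverse_reverse]
  set Q : G.Walk u w := R.reverse with hQdef
  clear_value Q
  clear hR
  subst hp4
  -- abbreviations for the decomposed cycle
  have hDsup : (Walk.cons h1 (Walk.cons h2 (Walk.cons h3 (Walk.cons h4
      (Q.concat h5.symm))))).support = v :: x :: y :: z :: (Q.support ++ [v]) := by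
    simp [List.concat_eq_append]
  have htail : (x :: y :: z :: (Q.support ++ [v])).Nodup := by
    have := hD.support_nodup
    simpa [List.concat_eq_append] using this
  have hTrail : (s(v, x) :: s(x, y) :: s(y, z) :: s(z, u) ::
      (Q.edges ++ [s(w, v)])).Nodup := by
    have := hD.isTrail.edges_nodup
    simpa [List.concat_eq_append] using this
  have hE : ∀ e, e ∈ C.edges ↔ e = s(v, x) ∨ e = s(x, y) ∨ e = s(y, z) ∨ e = s(z, u) ∨
      e ∈ Q.edges ∨ e = s(w, v) := by
    intro e
    rw [← hED e]
    simp [List.concat_eq_append]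
  have hS : ∀ t, t ∈ C.support ↔ t = v ∨ t = x ∨ t = y ∨ t = z ∨ t ∈ Q.support := by
    intro t
    rw [← hSD t]
    simp only [hDsup, List.mem_cons, List.mem_append, List.mem_singleton]
    tauto
  -- membership facts
  have huQ : u ∈ Q.support := Q.start_mem_support
  have hwQ : w ∈ Q.support := Q.end_mem_support
  have haQ : a ∉ Q.support := fun h => ha ((hS a).mpr (Or.inr (Or.inr (Or.inr (Or.inr h)))))
  have hcQ : c ∉ Q.support := fun h => hc ((hS c).mpr (Or.inr (Or.inr (Or.inr (Or.inr h)))))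
  have hmemQ : ∀ t ∈ ([x, y, z, v] : List V), t ∉ Q.support := by
    intro t ht h
    have h2 := htail
    simp only [List.nodup_cons, List.mem_cons, List.mem_append, List.mem_singleton,
      List.nodup_append, List.disjoint_singleton, not_or] at h2
    simp only [List.mem_cons, List.mem_singleton, List.not_mem_nil, or_false] at ht
    rcases ht with rfl | rfl | rfl | rfl <;> tauto
  have hxQ : x ∉ Q.support := hmemQ x (by simp)
  have hyQ : y ∉ Q.support := hmemQ y (by simp)
  have hzQ : z ∉ Q.support := hmemQ z (by simp)
  have hvQ : v ∉ Q.support := hmemQ v (by simp)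
  -- vertices of `C` are distinct from `a` and `c`
  have hWa : w ≠ a := fun h => ha (h ▸ (hS w).mpr (Or.inr (Or.inr (Or.inr (Or.inr hwQ)))))
  have hUa : u ≠ a := fun h => ha (h ▸ (hS u).mpr (Or.inr (Or.inr (Or.inr (Or.inr huQ)))))
  have hVa : v ≠ a := fun h => ha (h ▸ (hS v).mpr (Or.inl rfl))
  have hXa : x ≠ a := fun h => ha (h ▸ (hS x).mpr (Or.inr (Or.inl rfl)))
  have hYa : y ≠ a := fun h => ha (h ▸ (hS y).mpr (Or.inr (Or.inr (Or.inl rfl))))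
  have hZa : z ≠ a := fun h => ha (h ▸ (hS z).mpr (Or.inr (Or.inr (Or.inr (Or.inl rfl)))))
  have hWc : w ≠ c := fun h => hc (h ▸ (hS w).mpr (Or.inr (Or.inr (Or.inr (Or.inr hwQ)))))
  have hUc : u ≠ c := fun h => hc (h ▸ (hS u).mpr (Or.inr (Or.inr (Or.inr (Or.inr huQ)))))
  have hVc : v ≠ c := fun h => hc (h ▸ (hS v).mpr (Or.inl rfl))
  have hXc : x ≠ c := fun h => hc (h ▸ (hS x).mpr (Or.inr (Or.inl rfl)))
  have hYc : y ≠ c := fun h => hc (h ▸ (hS y).mpr (Or.inr (Or.inr (Or.inl rfl))))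
  have hZc : z ≠ c := fun h => hc (h ▸ (hS z).mpr (Or.inr (Or.inr (Or.inr (Or.inl rfl)))))
  have hWa' := hWa.symm; have hUa' := hUa.symm; have hVa' := hVa.symm
  have hXa' := hXa.symm; have hYa' := hYa.symm; have hZa' := hZa.symm
  have hWc' := hWc.symm; have hUc' := hUc.symm; have hVc' := hVc.symm
  have hXc' := hXc.symm; have hYc' := hYc.symm; have hZc' := hZc.symm
  have hac' := hac.symm
  have e1 := hwv'.symm; have e2 := hwx.symm; have e3 := hwy.symm
  have e4 := hwz.symm; have e5 := hwu.symm; have e6 := hvx'.symm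
  have e7 := hvy.symm; have e8 := hvz.symm; have e9 := hvu.symm
  have e10 := hxy'.symm; have e11 := hxz.symm; have e12 := hxu.symm
  have e13 := hyz'.symm; have e14 := hyu.symm; have e15 := hzu'.symm
  -- edges of `Q` avoid `a`, `c` and the removed/kept special edges
  have hQw' : (Q.edges ++ [s(w, v)]).Nodup :=
    (hTrail.of_cons.of_cons.of_cons).of_cons
  obtain ⟨hQnd, -, hdisj⟩ := List.nodup_append'.mp hQw'
  have hwvQ : s(w, v) ∉ Q.edges := fun h => hdisj h (List.mem_singleton.mpr rfl)
  have hqvx : s(v, x) ∉ Q.edges := fun h =>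
    (List.nodup_cons.mp hTrail).1 (by simp [h])
  have hqxy : s(x, y) ∉ Q.edges := fun h =>
    (List.nodup_cons.mp hTrail.of_cons).1 (by simp [h])
  have hqyz : s(y, z) ∉ Q.edges := fun h =>
    (List.nodup_cons.mp hTrail.of_cons.of_cons).1 (by simp [h])
  have hqzu : s(z, u) ∉ Q.edges := fun h =>
    (List.nodup_cons.mp hTrail.of_cons.of_cons.of_cons).1 (by simp [h])
  have hqva : s(v, a) ∉ Q.edges := fun h => haQ (Q.snd_mem_support_of_mem_edges h)
  have hqaz : s(a, z) ∉ Q.edges := fun h => haQ (Q.fst_mem_support_of_mem_edges h)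
  have hqzy : s(z, y) ∉ Q.edges := fun h => hzQ (Q.fst_mem_support_of_mem_edges h)
  have hqyx : s(y, x) ∉ Q.edges := fun h => hyQ (Q.fst_mem_support_of_mem_edges h)
  have hqxc : s(x, c) ∉ Q.edges := fun h => hcQ (Q.snd_mem_support_of_mem_edges h)
  have hqcu : s(c, u) ∉ Q.edges := fun h => hcQ (Q.fst_mem_support_of_mem_edges h)
  -- the new cycle
  refine ⟨v, Walk.cons hav.symm (Walk.cons haz (Walk.cons h3.symm (Walk.cons h2.symm
    (Walk.cons hcx.symm (Walk.cons hcu (Q.concat h5.symm)))))), ⟨⟨⟨?_⟩, by simp⟩, ?_⟩,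
    ?_, ?_, ?_⟩
  · -- edges are nodup
    simp only [Walk.edges_cons, Walk.edges_concat, List.concat_eq_append]
    refine List.nodup_cons.mpr ⟨?_, List.nodup_cons.mpr ⟨?_, List.nodup_cons.mpr ⟨?_,
      List.nodup_cons.mpr ⟨?_, List.nodup_cons.mpr ⟨?_, List.nodup_cons.mpr
      ⟨?_, hQw'⟩⟩⟩⟩⟩⟩ <;>
      simp only [List.mem_cons, List.mem_append, List.mem_singleton, List.not_mem_nil, not_or, not_false_eq_true, and_true]
    · exact ⟨sym2_ne_of_ne (Or.inl hVa) (Or.inl hvz),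
        sym2_ne_of_ne (Or.inl hvz) (Or.inl hvy),
        sym2_ne_of_ne (Or.inl hvy) (Or.inl hvx'),
        sym2_ne_of_ne (Or.inl hvx') (Or.inl hVc),
        sym2_ne_of_ne (Or.inl hVc) (Or.inl hvu), hqva,
        sym2_ne_of_ne (Or.inl e1) (Or.inr hWa')⟩
    · exact ⟨sym2_ne_of_ne (Or.inl hZa') (Or.inl hYa'),
        sym2_ne_of_ne (Or.inl hYa') (Or.inl hXa'),
        sym2_ne_of_ne (Or.inl hXa') (Or.inl hac),
        sym2_ne_of_ne (Or.inl hac) (Or.inl hUa'), hqaz,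
        sym2_ne_of_ne (Or.inl hWa') (Or.inl hVa')⟩
    · exact ⟨sym2_ne_of_ne (Or.inl e13) (Or.inl e11),
        sym2_ne_of_ne (Or.inl e11) (Or.inl hZc),
        sym2_ne_of_ne (Or.inl hZc) (Or.inl hzu'), hqzy,
        sym2_ne_of_ne (Or.inl e4) (Or.inl e8)⟩
    · exact ⟨sym2_ne_of_ne (Or.inl e10) (Or.inl hYc),
        sym2_ne_of_ne (Or.inl hYc) (Or.inl hyu), hqyx,
        sym2_ne_of_ne (Or.inl e3) (Or.inl e7)⟩
    · exact ⟨sym2_ne_of_ne (Or.inl hXc) (Or.inl hxu), hqxc,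
        sym2_ne_of_ne (Or.inl e2) (Or.inl e6)⟩
    · exact ⟨hqcu, sym2_ne_of_ne (Or.inl hWc') (Or.inl hVc')⟩
  · -- support tail is nodup
    simp only [Walk.support_cons, Walk.support_concat, List.concat_eq_append,
      List.tail_cons]
    have hQv : (Q.support ++ [v]).Nodup := htail.of_cons.of_cons.of_cons
    refine List.nodup_cons.mpr ⟨?_, List.nodup_cons.mpr ⟨?_, List.nodup_cons.mpr ⟨?_,
      List.nodup_cons.mpr ⟨?_, List.nodup_cons.mpr ⟨?_, hQv⟩⟩⟩⟩⟩ <;>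
      simp only [List.mem_cons, List.mem_append, List.mem_singleton, List.not_mem_nil, not_or, not_false_eq_true, and_true]
    · exact ⟨hZa', hYa', hXa', hac, haQ, hVa'⟩
    · exact ⟨e13, e11, hZc, hzQ, e8⟩
    · exact ⟨e10, hYc, hyQ, e7⟩
    · exact ⟨hXc, hxQ, e6⟩
    · exact ⟨hcQ, hVc'⟩
  · -- length
    have hlen : Q.length + 5 = C.length := by
      simpa using hLD
    simp only [Walk.length_cons, Walk.length_concat]
    omega
  · -- support
    intro t
    rw [hS t]
    simp only [Walk.support_cons, Walk.support_concat, List.concat_eq_append,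
      List.mem_cons, List.mem_append, List.mem_singleton]
    tauto
  · -- edge set
    ext e
    simp only [Set.mem_setOf_eq, Set.mem_diff, Set.mem_union, Set.mem_insert_iff,
      Set.mem_singleton_iff, Walk.edges_cons, Walk.edges_concat, List.concat_eq_append,
      List.mem_cons, List.mem_append, List.mem_singleton]
    rw [hE e]
    have hq : e ∈ Q.edges → e ≠ s(v, x) ∧ e ≠ s(x, y) ∧ e ≠ s(y, z) ∧ e ≠ s(z, u) ∧
        e ≠ s(w, v) := fun h =>
      ⟨fun he => hqvx (he ▸ h), fun he => hqxy (he ▸ h), fun he => hqyz (he ▸ h),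
        fun he => hqzu (he ▸ h), fun he => hwvQ (he ▸ h)⟩
    clear * - hq
    tauto
end

section
/- Let G be a simple graph and let C be a cycle of G containing consecutive vertices t, v, w, x, y, z. Let b and c be two distinct vertices of G not on C such that b is adjacent to t and w, and c is adjacent to x and z, and suppose v is adjacent to y in G. Then G contains a cycle of length |C| + 2 whose vertex set is V(C) ∪ {b, c}; the new cycle is obtained from C by replacing the path (t, v, w, x, y, z) with the path (t, b, w, v, y, x, c, z). -/
open SimpleGraph Walk

lemma start_edge {V : Type*} {G : SimpleGraph V} {u a v : V} (P : G.Walk u a)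
    (hP : u ∉ P.support.tail) (he : s(u,v) ∈ P.edges) :
    ∃ (Q : G.Walk v a) (h : G.Adj u v), P = Walk.cons h Q := by
  cases P with
  | nil => simp at he
  | @cons _ u' _ h q =>
    simp only [Walk.edges_cons, List.mem_cons] at he
    simp only [Walk.support_cons, List.tail_cons] at hP
    rcases he with he | he
    · rw [Sym2.eq_iff] at he
      rcases he with ⟨-, rfl⟩ | ⟨h1, rfl⟩
      · exact ⟨q, h, rfl⟩
      · cases h1; exact absurd q.start_mem_support hP
    · exact absurd (q.fst_mem_support_of_mem_edges he) hP

lemma mem_support_tail_closed {V : Type*} {G : SimpleGraph V} {a : V} {p : G.Walk a a}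
    (hp : ¬ p.Nil) (s : V) : s ∈ p.support ↔ s ∈ p.support.tail := by
  cases p with
  | nil => simp at hp
  | cons h q =>
    simp only [Walk.support_cons, List.tail_cons, List.mem_cons]
    constructor
    · rintro (rfl | hs)
      · exact q.end_mem_support
      · exact hs
    · exact Or.inr

lemma key {V : Type*} {G : SimpleGraph V} {t v w x y z b c : V}
    (hadj : G.Adj t v) (P : G.Walk v t) (hP : P.support.Nodup)
    (hEd : (Walk.cons hadj P).edges.Nodup)
    (hdist : [t, v, w, x, y, z].Pairwise (· ≠ ·))
    (hvw : s(v, w) ∈ P.edges) (hwx : s(w, x) ∈ P.edges)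
    (hxy : s(x, y) ∈ P.edges) (hyz : s(y, z) ∈ P.edges)
    (hbc : b ≠ c) (hb : b ∉ (Walk.cons hadj P).support) (hc : c ∉ (Walk.cons hadj P).support)
    (hbt : G.Adj b t) (hbw : G.Adj b w) (hcx : G.Adj c x) (hcz : G.Adj c z)
    (hvy : G.Adj v y) :
    ∃ C' : G.Walk t t, C'.IsCycle ∧ C'.length = (Walk.cons hadj P).length + 2 ∧
      (∀ s, s ∈ C'.support ↔ s ∈ (Walk.cons hadj P).support ∨ s = b ∨ s = c) ∧
      {e | e ∈ C'.edges} =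
        ({e | e ∈ (Walk.cons hadj P).edges} \ {s(t, v), s(v, w), s(w, x), s(x, y), s(y, z)}) ∪
          {s(t, b), s(b, w), s(w, v), s(v, y), s(y, x), s(x, c), s(c, z)} := by
  simp only [List.pairwise_cons, List.mem_cons, List.mem_singleton, List.not_mem_nil,
    forall_eq_or_imp, forall_eq, List.Pairwise.nil, and_true, IsEmpty.forall_iff] at hdist
  obtain ⟨⟨htv, htw, htx, hty, htz, -⟩, ⟨hvw', hvx, hvy', hvz, -⟩, ⟨hwx', hwy, hwz, -⟩,
    ⟨hxy', hxz, -⟩, ⟨hyz', -⟩, -⟩ := hdist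
  -- peel the path P into v-w-x-y-z followed by T
  have hv : v ∉ P.support.tail := (List.nodup_cons.mp (P.support_eq_cons ▸ hP)).1
  obtain ⟨Q, h1, rfl⟩ := start_edge P hv hvw
  simp only [Walk.support_cons, List.nodup_cons] at hP
  have hwQ : s(w, x) ∈ Q.edges := by
    simp only [Walk.edges_cons, List.mem_cons, Sym2.eq_iff] at hwx
    tauto
  have hw : w ∉ Q.support.tail := (List.nodup_cons.mp (Q.support_eq_cons ▸ hP.2)).1
  obtain ⟨R, h2, rfl⟩ := start_edge Q hw hwQ
  simp only [Walk.support_cons, List.nodup_cons, List.mem_cons] at hP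
  have hxR : s(x, y) ∈ R.edges := by
    simp only [Walk.edges_cons, List.mem_cons, Sym2.eq_iff] at hxy
    tauto
  have hx : x ∉ R.support.tail := (List.nodup_cons.mp (R.support_eq_cons ▸ hP.2.2)).1
  obtain ⟨S, h3, rfl⟩ := start_edge R hx hxR
  simp only [Walk.support_cons, List.nodup_cons, List.mem_cons] at hP
  have hyS : s(y, z) ∈ S.edges := by
    simp only [Walk.edges_cons, List.mem_cons, Sym2.eq_iff] at hyz
    tauto
  have hy : y ∉ S.support.tail := (List.nodup_cons.mp (S.support_eq_cons ▸ hP.2.2.2)).1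
  obtain ⟨T, h4, rfl⟩ := start_edge S hy hyS
  simp only [Walk.support_cons, List.nodup_cons, List.mem_cons, not_or] at hP hb hc
  simp only [Walk.edges_cons, List.nodup_cons, List.mem_cons, not_or] at hEd
  obtain ⟨hbt', hbv, hbw', hbx, hby, hbT⟩ := hb
  obtain ⟨hct', hcv, hcw, hcx', hcy, hcT⟩ := hc
  have e1 : s(t, v) ∉ T.edges := hEd.1.2.2.2.2
  have e2 : s(v, w) ∉ T.edges := hEd.2.1.2.2.2
  have e3 : s(w, x) ∉ T.edges := hEd.2.2.1.2.2
  have e4 : s(x, y) ∉ T.edges := hEd.2.2.2.1.2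
  have e5 : s(y, z) ∉ T.edges := hEd.2.2.2.2.1
  obtain ⟨⟨hvw2, hvx2, hvy2, hvT⟩, ⟨hwx2, hwy2, hwT⟩, ⟨hxy2, hxT⟩, hyT, hT⟩ := hP
  have hzT : z ∈ T.support := T.start_mem_support
  have htT : t ∈ T.support := T.end_mem_support
  refine ⟨Walk.cons hbt.symm (Walk.cons hbw (Walk.cons h1.symm (Walk.cons hvy
    (Walk.cons h3.symm (Walk.cons hcx.symm (Walk.cons hcz T)))))), ?_, ?_, ?_, ?_⟩
  · rw [Walk.cons_isCycle_iff]
    constructor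
    · apply Walk.IsPath.mk'
      simp only [Walk.support_cons, List.nodup_cons, List.mem_cons, not_or]
      exact ⟨⟨hbw', hbv, hby, hbx, hbc, hbT⟩,
        ⟨Ne.symm hvw2, hwy2, hwx2, fun h => hcw h.symm, hwT⟩,
        ⟨hvy2, hvx2, fun h => hcv h.symm, hvT⟩,
        ⟨Ne.symm hxy2, fun h => hcy h.symm, hyT⟩,
        ⟨fun h => hcx' h.symm, hxT⟩, hcT, hT⟩
    · simp only [Walk.edges_cons, List.mem_cons, not_or, Sym2.eq_iff]
      exact ⟨⟨fun hh => hbt' hh.1.symm, fun hh => htw hh.1⟩,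
        ⟨fun hh => htw hh.1, fun hh => htv hh.1⟩,
        ⟨fun hh => htv hh.1, fun hh => hty hh.1⟩,
        ⟨fun hh => hty hh.1, fun hh => htx hh.1⟩,
        ⟨fun hh => htx hh.1, fun hh => hct' hh.1.symm⟩,
        ⟨fun hh => hct' hh.1.symm, fun hh => htz hh.1⟩,
        fun hh => hbT (T.snd_mem_support_of_mem_edges hh)⟩
  · simp only [Walk.length_cons]
  · intro s
    simp only [Walk.support_cons, List.mem_cons]
    clear * - s
    tauto
  · ext e
    simp only [Set.mem_setOf_eq, Set.mem_union, Set.mem_diff, Set.mem_insert_iff,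
      Set.mem_singleton_iff, Walk.edges_cons, List.mem_cons]
    have H1 : e ∈ T.edges → ¬ e = s(t, v) := fun he heq => e1 (heq ▸ he)
    have H2 : e ∈ T.edges → ¬ e = s(v, w) := fun he heq => e2 (heq ▸ he)
    have H3 : e ∈ T.edges → ¬ e = s(w, x) := fun he heq => e3 (heq ▸ he)
    have H4 : e ∈ T.edges → ¬ e = s(x, y) := fun he heq => e4 (heq ▸ he)
    have H5 : e ∈ T.edges → ¬ e = s(y, z) := fun he heq => e5 (heq ▸ he)
    clear * - H1 H2 H3 H4 H5
    itauto

/-- First replacement of Case 4b: if `t, v, w, x, y, z` are consecutive vertices of a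
cycle `C`, `b ≠ c` are vertices off `C` with `b` adjacent to `t, w` and `c` adjacent to
`x, z`, and `v` is adjacent to `y` in `G`, then `G` has a cycle of length `|C| + 2` on
vertex set `V(C) ∪ {b, c}`, obtained from `C` by replacing the path `(t, v, w, x, y, z)`
with the path `(t, b, w, v, y, x, c, z)`. -/
theorem case4b_replacement {V : Type*} (G : SimpleGraph V) {v0 : V}
    (C : G.Walk v0 v0) (hC : C.IsCycle) (t v w x y z b c : V)
    (hdist : [t, v, w, x, y, z].Pairwise (· ≠ ·))
    (htv : s(t, v) ∈ C.edges) (hvw : s(v, w) ∈ C.edges) (hwx : s(w, x) ∈ C.edges)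
    (hxy : s(x, y) ∈ C.edges) (hyz : s(y, z) ∈ C.edges)
    (hbc : b ≠ c) (hb : b ∉ C.support) (hc : c ∉ C.support)
    (hbt : G.Adj b t) (hbw : G.Adj b w) (hcx : G.Adj c x) (hcz : G.Adj c z)
    (hvy : G.Adj v y) :
    ∃ (w0 : V) (C' : G.Walk w0 w0), C'.IsCycle ∧ C'.length = C.length + 2 ∧
      (∀ s, s ∈ C'.support ↔ s ∈ C.support ∨ s = b ∨ s = c) ∧
      {e | e ∈ C'.edges} =
        ({e | e ∈ C.edges} \ {s(t, v), s(v, w), s(w, x), s(x, y), s(y, z)}) ∪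
          {s(t, b), s(b, w), s(w, v), s(v, y), s(y, x), s(x, c), s(c, z)} := by
  classical
  have hdist' := hdist
  simp only [List.pairwise_cons, List.mem_cons, List.mem_singleton, List.not_mem_nil,
    forall_eq_or_imp, forall_eq, List.Pairwise.nil, and_true, IsEmpty.forall_iff] at hdist'
  obtain ⟨⟨htv', htw', htx', hty', htz', -⟩, ⟨hvw', hvx', hvy', hvz', -⟩, ⟨hwx', hwy', hwz', -⟩,
    ⟨hxy', hxz', -⟩, ⟨hyz', -⟩, -⟩ := hdist'
  have ht : t ∈ C.support := C.fst_mem_support_of_mem_edges htv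
  have hD : (C.rotate t ht).IsCycle := hC.rotate ht
  have hDe : ∀ e, e ∈ (C.rotate t ht).edges ↔ e ∈ C.edges := fun e => (C.rotate_edges t ht).mem_iff
  have hDs : ∀ s, s ∈ (C.rotate t ht).support ↔ s ∈ C.support := fun s => by
    rw [mem_support_tail_closed hD.not_nil, mem_support_tail_closed hC.not_nil,
      (C.support_rotate t ht).mem_iff]
  have hDl : (C.rotate t ht).length = C.length := by
    rw [← Walk.length_edges, ← Walk.length_edges, (C.rotate_edges t ht).perm.length_eq]
  obtain ⟨hadj, P, hP, hEd, hEe, hEs, hEl⟩ :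
      ∃ (hadj : G.Adj t v) (P : G.Walk v t), P.support.Nodup ∧
        (Walk.cons hadj P).edges.Nodup ∧
        (∀ e, e ∈ (Walk.cons hadj P).edges ↔ e ∈ C.edges) ∧
        (∀ s, s ∈ (Walk.cons hadj P).support ↔ s ∈ C.support) ∧
        (Walk.cons hadj P).length = C.length := by
    have hDtrail : (C.rotate t ht).edges.Nodup := hD.isTrail.edges_nodup
    have hDnodup : (C.rotate t ht).support.tail.Nodup := hD.support_nodup
    obtain ⟨u, h0, q, hDq⟩ : ∃ (u : V) (h0 : G.Adj t u) (q : G.Walk u t),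
        C.rotate t ht = Walk.cons h0 q := by
      cases hq : C.rotate t ht with
      | nil => exact absurd hq hD.ne_nil
      | cons h0 q => exact ⟨_, h0, q, rfl⟩
    have hq : q.support.Nodup := by
      have := hDnodup; rw [hDq] at this; simpa using this
    have htvD : s(t, v) ∈ (C.rotate t ht).edges := (hDe _).mpr htv
    rw [hDq, Walk.edges_cons, List.mem_cons] at htvD
    rcases htvD with heq | hmem
    · rw [Sym2.eq_iff] at heq
      rcases heq with ⟨-, rfl⟩ | ⟨rfl, rfl⟩
      · refine ⟨h0, q, hq, ?_, ?_, ?_, ?_⟩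
        · rw [← hDq]; exact hDtrail
        · intro e; rw [← hDq]; exact hDe e
        · intro s; rw [← hDq]; exact hDs s
        · rw [← hDq]; exact hDl
      · exact absurd rfl h0.ne
    · -- the edge t-v appears inside q; use the reverse walk
      have hqr : q.reverse.support.Nodup := by
        rw [Walk.support_reverse]; exact List.nodup_reverse.mpr hq
      have htq : t ∉ q.reverse.support.tail :=
        (List.nodup_cons.mp (q.reverse.support_eq_cons ▸ hqr)).1
      have hmem' : s(t, v) ∈ q.reverse.edges := by
        rw [Walk.edges_reverse, List.mem_reverse]; exact hmem
      obtain ⟨Q, h0', hq'⟩ := start_edge q.reverse htq hmem'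
      have hE : (C.rotate t ht).reverse = Walk.cons h0' (Q.append (Walk.cons h0.symm Walk.nil)) := by
        rw [hDq, Walk.reverse_cons, hq', Walk.cons_append]
      refine ⟨h0', Q.append (Walk.cons h0.symm Walk.nil), ?_, ?_, ?_, ?_, ?_⟩
      · have hQn : (t :: Q.support).Nodup := by
          rw [← Walk.support_cons h0' Q, ← hq']; exact hqr
        rw [Walk.support_append]
        simp only [Walk.support_cons, Walk.support_nil, List.tail_cons]
        rw [List.nodup_cons] at hQn
        simp [List.nodup_append, hQn.1, hQn.2]
        exact fun a ha hat => hQn.1 (hat ▸ ha)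
      · rw [← hE, Walk.edges_reverse]
        exact List.nodup_reverse.mpr hDtrail
      · intro e
        rw [← hE, Walk.edges_reverse, List.mem_reverse]
        exact hDe e
      · intro s
        rw [← hE, Walk.support_reverse, List.mem_reverse]
        exact hDs s
      · rw [← hE, Walk.length_reverse]
        exact hDl
  -- transfer edge memberships into P
  have hvwP : s(v, w) ∈ P.edges := by
    have := (hEe _).mpr hvw
    rw [Walk.edges_cons, List.mem_cons, Sym2.eq_iff] at this
    tauto
  have hwxP : s(w, x) ∈ P.edges := by
    have := (hEe _).mpr hwx
    rw [Walk.edges_cons, List.mem_cons, Sym2.eq_iff] at this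
    tauto
  have hxyP : s(x, y) ∈ P.edges := by
    have := (hEe _).mpr hxy
    rw [Walk.edges_cons, List.mem_cons, Sym2.eq_iff] at this
    tauto
  have hyzP : s(y, z) ∈ P.edges := by
    have := (hEe _).mpr hyz
    rw [Walk.edges_cons, List.mem_cons, Sym2.eq_iff] at this
    tauto
  obtain ⟨C', hcyc, hlen, hsup, hedg⟩ := key hadj P hP hEd hdist hvwP hwxP hxyP hyzP hbc
    (fun hh => hb ((hEs b).mp hh)) (fun hh => hc ((hEs c).mp hh)) hbt hbw hcx hcz hvy
  refine ⟨t, C', hcyc, by rw [hlen, hEl], fun s => by rw [hsup s, hEs s], ?_⟩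
  rw [hedg]
  congr 1
  congr 1
  ext e
  simp only [Set.mem_setOf_eq]
  exact hEe e
end

section
/- Let G be a simple graph and let C be a cycle of G containing consecutive vertices t, v, w, x, y, z. Let b be a vertex of G not on C that is adjacent to both t and x, and suppose v is adjacent to y in G. Then G contains a cycle of length |C| + 1 whose vertex set is V(C) ∪ {b}; the new cycle is obtained from C by replacing the path (t, v, w, x, y, z) with the path (t, b, x, w, v, y, z). -/
set_option maxHeartbeats 1000000
open SimpleGraph Walk

private lemma peel_path {V : Type*} {G : SimpleGraph V} {v t w : V} {p : G.Walk v t}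
    (hp : p.IsPath) (hw : w ≠ v) (h : s(v, w) ∈ p.edges) :
    ∃ (h' : G.Adj v w) (q : G.Walk w t), p = Walk.cons h' q := by
  cases p with
  | nil => simp at h
  | cons a q =>
    rw [Walk.edges_cons, List.mem_cons] at h
    rcases h with h | h
    · rw [Sym2.eq_iff] at h
      rcases h with ⟨-, rfl⟩ | ⟨rfl, h2⟩
      · exact ⟨a, q, rfl⟩
      · exact absurd h2 hw
    · exact absurd (q.fst_mem_support_of_mem_edges h)
        ((Walk.cons_isPath_iff _ _).mp hp).2

private lemma rev_tail_perm {V : Type*} {G : SimpleGraph V} {u : V} (p : G.Walk u u) :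
    List.Perm p.reverse.support.tail p.support.tail := by
  have h2 : p.support = p.support.dropLast ++ [u] := by
    conv_lhs => rw [← List.dropLast_append_getLast (p.support_ne_nil)]
    rw [p.getLast_support]
  have h3 : List.Perm p.support.tail p.support.dropLast := by
    have := (Walk.support_eq_cons p).symm.trans h2
    have h4 : List.Perm (p.support.dropLast ++ [u]) (u :: p.support.dropLast) :=
      List.perm_append_singleton _ _
    exact List.Perm.cons_inv (a := u) (this ▸ h4.symm).symm
  rw [Walk.support_reverse]
  conv_lhs => rw [h2]
  rw [List.reverse_append, List.reverse_singleton, List.singleton_append, List.tail_cons]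
  exact (List.reverse_perm _).trans h3.symm

private lemma isCycle_reverse_s9 {V : Type*} {G : SimpleGraph V} {u : V} {p : G.Walk u u}
    (h : p.IsCycle) : p.reverse.IsCycle := by
  rw [Walk.isCycle_def] at h ⊢
  refine ⟨h.1.reverse, ?_, ((rev_tail_perm p).nodup_iff).mpr h.2.2⟩
  intro h'
  apply h.2.1
  have := congr_arg Walk.reverse h'
  rwa [Walk.reverse_reverse] at this

private lemma cycle_start {V : Type*} {G : SimpleGraph V} {t v : V} {D : G.Walk t t}
    (hD : D.IsCycle) (hv : v ≠ t) (h : s(t, v) ∈ D.edges) :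
    ∃ (E : G.Walk t t), E.IsCycle ∧ (∀ e, e ∈ E.edges ↔ e ∈ D.edges) ∧
      (∀ s, s ∈ E.support ↔ s ∈ D.support) ∧ E.length = D.length ∧
      ∃ (h' : G.Adj t v) (q : G.Walk v t), E = Walk.cons h' q := by
  cases D with
  | nil => exact absurd rfl hD.ne_nil
  | @cons _ u _ a p =>
    have hp : p.IsPath := ((Walk.cons_isCycle_iff _ _).mp hD).1
    rw [Walk.edges_cons, List.mem_cons] at h
    rcases h with h | h
    · rw [Sym2.eq_iff] at h
      rcases h with ⟨-, rfl⟩ | ⟨h1, rfl⟩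
      · exact ⟨_, hD, fun _ => Iff.rfl, fun _ => Iff.rfl, rfl, a, p, rfl⟩
      · exact absurd rfl hv
    · have h' : s(t, v) ∈ p.reverse.edges := by
        rw [Walk.edges_reverse, List.mem_reverse]; exact h
      obtain ⟨h'', q, hq⟩ := peel_path hp.reverse hv h'
      refine ⟨(Walk.cons a p).reverse, isCycle_reverse_s9 hD, ?_, ?_, Walk.length_reverse _,
        h'', q.append (Walk.cons a.symm Walk.nil), ?_⟩
      · intro e; rw [Walk.edges_reverse, List.mem_reverse]
      · intro s; rw [Walk.support_reverse, List.mem_reverse]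
      · rw [Walk.reverse_cons, hq, Walk.cons_append]

/-- First replacement of Case 4c: if `t, v, w, x, y, z` are consecutive vertices of a
cycle `C`, `b` is a vertex off `C` adjacent to `t` and `x`, and `v` is adjacent to `y`
in `G`, then `G` has a cycle of length `|C| + 1` on vertex set `V(C) ∪ {b}`, obtained
from `C` by replacing the path `(t, v, w, x, y, z)` with the path
`(t, b, x, w, v, y, z)`. -/
theorem case4c_replacement {V : Type*} (G : SimpleGraph V) {v0 : V}
    (C : G.Walk v0 v0) (hC : C.IsCycle) (t v w x y z b : V)
    (hdist : [t, v, w, x, y, z].Pairwise (· ≠ ·))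
    (htv : s(t, v) ∈ C.edges) (hvw : s(v, w) ∈ C.edges) (hwx : s(w, x) ∈ C.edges)
    (hxy : s(x, y) ∈ C.edges) (hyz : s(y, z) ∈ C.edges)
    (hb : b ∉ C.support) (hbt : G.Adj b t) (hbx : G.Adj b x) (hvy : G.Adj v y) :
    ∃ (w0 : V) (C' : G.Walk w0 w0), C'.IsCycle ∧ C'.length = C.length + 1 ∧
      (∀ s, s ∈ C'.support ↔ s ∈ C.support ∨ s = b) ∧
      {e | e ∈ C'.edges} =
        ({e | e ∈ C.edges} \ {s(t, v), s(v, w), s(w, x), s(x, y), s(y, z)}) ∪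
          {s(t, b), s(b, x), s(x, w), s(w, v), s(v, y), s(y, z)} := by
  classical
  simp only [List.pairwise_cons, List.mem_cons, List.mem_singleton, List.not_mem_nil,
    forall_eq_or_imp, forall_eq, List.Pairwise.nil] at hdist
  obtain ⟨⟨ntv, ntw, ntx, nty, ntz, -⟩, ⟨nvw, nvx, nvy, nvz, -⟩, ⟨nwx, nwy, nwz, -⟩, ⟨nxy, nxz, -⟩, ⟨nyz, -⟩, -⟩ :=
    hdist
  -- vertex memberships in C
  have tmem : t ∈ C.support := C.fst_mem_support_of_mem_edges htv
  have vmem : v ∈ C.support := C.snd_mem_support_of_mem_edges htv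
  have wmem : w ∈ C.support := C.fst_mem_support_of_mem_edges hwx
  have xmem : x ∈ C.support := C.snd_mem_support_of_mem_edges hwx
  have ymem : y ∈ C.support := C.fst_mem_support_of_mem_edges hyz
  have zmem : z ∈ C.support := C.snd_mem_support_of_mem_edges hyz
  have nbt : b ≠ t := fun h => hb (h ▸ tmem)
  have nbv : b ≠ v := fun h => hb (h ▸ vmem)
  have nbw : b ≠ w := fun h => hb (h ▸ wmem)
  have nbx : b ≠ x := fun h => hb (h ▸ xmem)
  have nby : b ≠ y := fun h => hb (h ▸ ymem)
  have nbz : b ≠ z := fun h => hb (h ▸ zmem)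
  -- rotate C to start at t
  set D := C.rotate t tmem with hDdef
  have hD : D.IsCycle := hC.rotate tmem
  have hDe : ∀ e, e ∈ D.edges ↔ e ∈ C.edges := fun e => (C.rotate_edges t tmem).mem_iff
  have hDs : ∀ s, s ∈ D.support ↔ s ∈ C.support := by
    intro s
    rw [hDdef]
    conv_rhs => rw [← C.take_spec tmem]
    rw [Walk.rotate, Walk.mem_support_append_iff, Walk.mem_support_append_iff]
    tauto
  have hDl : D.length = C.length := by
    have h1 := congr_arg Walk.length (C.take_spec tmem)
    rw [Walk.length_append] at h1
    rw [hDdef, Walk.rotate, Walk.length_append]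
    omega
  obtain ⟨E, hE, hEe', hEs', hEl', a0, q, rfl⟩ :=
    cycle_start hD (Ne.symm ntv) ((hDe _).mpr htv)
  have hEe : ∀ e, e ∈ (Walk.cons a0 q).edges ↔ e ∈ C.edges := fun e => (hEe' e).trans (hDe e)
  have hEs : ∀ s, s ∈ (Walk.cons a0 q).support ↔ s ∈ C.support := fun s => (hEs' s).trans (hDs s)
  have hEl : (Walk.cons a0 q).length = C.length := hEl'.trans hDl
  clear hEe' hEs' hEl' hDe hDs hDl hD
  obtain ⟨hqpath, hqe⟩ := (Walk.cons_isCycle_iff _ _).mp hE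
  -- peel v → w
  have e1 : s(v, w) ∈ q.edges := by
    have h1 := (hEe _).mpr hvw
    rw [Walk.edges_cons, List.mem_cons, Sym2.eq_iff] at h1
    rcases h1 with (⟨h, h'⟩ | ⟨h, h'⟩) | h1
    · exact absurd h.symm ntv
    · exact absurd h'.symm ntw
    · exact h1
  obtain ⟨a1, q1, rfl⟩ := peel_path hqpath (Ne.symm nvw) e1
  have hq1path : q1.IsPath := ((Walk.cons_isPath_iff _ _).mp hqpath).1
  -- peel w → x
  have e2 : s(w, x) ∈ q1.edges := by
    have h1 := (hEe _).mpr hwx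
    rw [Walk.edges_cons, Walk.edges_cons, List.mem_cons, List.mem_cons,
      Sym2.eq_iff, Sym2.eq_iff] at h1
    rcases h1 with (⟨h, h'⟩ | ⟨h, h'⟩) | (⟨h, h'⟩ | ⟨h, h'⟩) | h1
    · exact absurd h.symm ntw
    · exact absurd h.symm nvw
    · exact absurd h.symm nvw
    · exact absurd h'.symm nvx
    · exact h1
  obtain ⟨a2, q2, rfl⟩ := peel_path hq1path (Ne.symm nwx) e2
  have hq2path : q2.IsPath := ((Walk.cons_isPath_iff _ _).mp hq1path).1
  -- peel x → y
  have e3 : s(x, y) ∈ q2.edges := by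
    have h1 := (hEe _).mpr hxy
    rw [Walk.edges_cons, Walk.edges_cons, Walk.edges_cons, List.mem_cons, List.mem_cons,
      List.mem_cons, Sym2.eq_iff, Sym2.eq_iff, Sym2.eq_iff] at h1
    rcases h1 with (⟨h, h'⟩ | ⟨h, h'⟩) | (⟨h, h'⟩ | ⟨h, h'⟩) | (⟨h, h'⟩ | ⟨h, h'⟩) | h1
    · exact absurd h.symm ntx
    · exact absurd h.symm nvx
    · exact absurd h.symm nvx
    · exact absurd h.symm nwx
    · exact absurd h.symm nwx
    · exact absurd h'.symm nwy
    · exact h1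
  obtain ⟨a3, q3, rfl⟩ := peel_path hq2path (Ne.symm nxy) e3
  have hq3path : q3.IsPath := ((Walk.cons_isPath_iff _ _).mp hq2path).1
  -- peel y → z
  have e4 : s(y, z) ∈ q3.edges := by
    have h1 := (hEe _).mpr hyz
    rw [Walk.edges_cons, Walk.edges_cons, Walk.edges_cons, Walk.edges_cons, List.mem_cons,
      List.mem_cons, List.mem_cons, List.mem_cons, Sym2.eq_iff, Sym2.eq_iff, Sym2.eq_iff,
      Sym2.eq_iff] at h1
    rcases h1 with (⟨h, h'⟩ | ⟨h, h'⟩) | (⟨h, h'⟩ | ⟨h, h'⟩) | (⟨h, h'⟩ | ⟨h, h'⟩) |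
      (⟨h, h'⟩ | ⟨h, h'⟩) | h1
    · exact absurd h.symm nty
    · exact absurd h.symm nvy
    · exact absurd h.symm nvy
    · exact absurd h.symm nwy
    · exact absurd h.symm nwy
    · exact absurd h.symm nxy
    · exact absurd h.symm nxy
    · exact absurd h'.symm nxz
    · exact h1
  obtain ⟨a4, q4, rfl⟩ := peel_path hq3path (Ne.symm nyz) e4
  clear e1 e2 e3 e4 hqe hqpath hq1path hq2path hq3path
  -- decompose nodup facts of E
  have hEnodup := hE.edges_nodup
  simp only [Walk.edges_cons, List.nodup_cons, List.mem_cons, not_or] at hEnodup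
  obtain ⟨⟨-, -, -, -, ftv⟩, ⟨-, -, -, fvw⟩, ⟨-, -, fwx⟩, ⟨-, fxy⟩, fyz, hq4ed⟩ := hEnodup
  have hEsup := hE.support_nodup
  simp only [Walk.support_cons, List.tail_cons, List.nodup_cons, List.mem_cons,
    not_or] at hEsup
  obtain ⟨⟨-, -, -, vns⟩, ⟨-, -, wns⟩, ⟨-, xns⟩, yns, hq4sup⟩ := hEsup
  have bns : b ∉ q4.support := fun hmem => hb ((hEs b).mp (by
    simp only [Walk.support_cons, List.mem_cons]
    exact Or.inr (Or.inr (Or.inr (Or.inr (Or.inr hmem))))))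
  have nb_tb : s(t, b) ∉ q4.edges := fun h => bns (q4.snd_mem_support_of_mem_edges h)
  have nb_bx : s(b, x) ∉ q4.edges := fun h => bns (q4.fst_mem_support_of_mem_edges h)
  have n_xw : s(x, w) ∉ q4.edges := by rw [Sym2.eq_swap]; exact fwx
  have n_wv : s(w, v) ∉ q4.edges := by rw [Sym2.eq_swap]; exact fvw
  have n_vy : s(v, y) ∉ q4.edges := fun h => vns (q4.fst_mem_support_of_mem_edges h)
  have sne : ∀ {a b c d : V}, (a ≠ c ∨ b ≠ d) → (a ≠ d ∨ b ≠ c) → s(a, b) ≠ s(c, d) := by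
    intro a b c d h1 h2 h
    rw [Sym2.eq_iff] at h
    rcases h with ⟨ha, hb⟩ | ⟨ha, hb⟩
    · rcases h1 with h1 | h1 <;> [exact h1 ha; exact h1 hb]
    · rcases h2 with h2 | h2 <;> [exact h2 ha; exact h2 hb]
  refine ⟨t, Walk.cons hbt.symm (Walk.cons hbx (Walk.cons a2.symm (Walk.cons a1.symm
    (Walk.cons hvy (Walk.cons a4 q4))))), ?_, ?_, ?_, ?_⟩
  · rw [Walk.isCycle_def]
    refine ⟨?_, by simp, ?_⟩
    · rw [Walk.isTrail_def]
      simp only [Walk.edges_cons, List.nodup_cons, List.mem_cons, not_or]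
      exact ⟨⟨sne (Or.inl (Ne.symm nbt)) (Or.inl ntx), sne (Or.inr nbw) (Or.inr nbx),
          sne (Or.inr nbv) (Or.inr nbw), sne (Or.inr nby) (Or.inr nbv),
          sne (Or.inr nbz) (Or.inr nby), nb_tb⟩,
        ⟨sne (Or.inl nbx) (Or.inl nbw), sne (Or.inl nbw) (Or.inl nbv),
          sne (Or.inl nbv) (Or.inl nby), sne (Or.inl nby) (Or.inl nbz), nb_bx⟩,
        ⟨sne (Or.inl (Ne.symm nwx)) (Or.inl (Ne.symm nvx)),
          sne (Or.inl (Ne.symm nvx)) (Or.inl nxy),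
          sne (Or.inl nxy) (Or.inl nxz), n_xw⟩,
        ⟨sne (Or.inl (Ne.symm nvw)) (Or.inl nwy),
          sne (Or.inl nwy) (Or.inl nwz), n_wv⟩,
        ⟨sne (Or.inl nvy) (Or.inl nvz), n_vy⟩, fyz, hq4ed⟩
    · simp only [Walk.support_cons, List.tail_cons, List.nodup_cons, List.mem_cons, not_or]
      exact ⟨⟨nbx, nbw, nbv, nby, bns⟩, ⟨Ne.symm nwx, Ne.symm nvx, nxy, xns⟩,
        ⟨Ne.symm nvw, nwy, wns⟩, ⟨nvy, vns⟩, yns, hq4sup⟩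
  · simp only [Walk.length_cons] at hEl ⊢
    omega
  · intro s
    have hs := hEs s
    simp only [Walk.support_cons, List.mem_cons] at hs ⊢
    constructor
    · rintro (h | h | h | h | h | h | h)
      exacts [Or.inl (hs.mp (Or.inl h)), Or.inr h,
        Or.inl (hs.mp (Or.inr (Or.inr (Or.inr (Or.inl h))))),
        Or.inl (hs.mp (Or.inr (Or.inr (Or.inl h)))),
        Or.inl (hs.mp (Or.inr (Or.inl h))),
        Or.inl (hs.mp (Or.inr (Or.inr (Or.inr (Or.inr (Or.inl h)))))),
        Or.inl (hs.mp (Or.inr (Or.inr (Or.inr (Or.inr (Or.inr h))))))]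
    · rintro (h | h)
      · rcases hs.mpr h with h | h | h | h | h | h
        exacts [Or.inl h,
          Or.inr (Or.inr (Or.inr (Or.inr (Or.inl h)))),
          Or.inr (Or.inr (Or.inr (Or.inl h))),
          Or.inr (Or.inr (Or.inl h)),
          Or.inr (Or.inr (Or.inr (Or.inr (Or.inr (Or.inl h))))),
          Or.inr (Or.inr (Or.inr (Or.inr (Or.inr (Or.inr h)))))]
      · exact Or.inr (Or.inl h)
  · ext e
    have he := hEe e
    simp only [Walk.edges_cons, List.mem_cons] at he
    simp only [Set.mem_setOf_eq, Set.mem_union, Set.mem_diff, Set.mem_insert_iff,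
      Set.mem_singleton_iff, Walk.edges_cons, List.mem_cons, ← he]
    constructor
    · rintro (h | h | h | h | h | h | h)
      · exact Or.inr (Or.inl h)
      · exact Or.inr (Or.inr (Or.inl h))
      · exact Or.inr (Or.inr (Or.inr (Or.inl h)))
      · exact Or.inr (Or.inr (Or.inr (Or.inr (Or.inl h))))
      · exact Or.inr (Or.inr (Or.inr (Or.inr (Or.inr (Or.inl h)))))
      · exact Or.inr (Or.inr (Or.inr (Or.inr (Or.inr (Or.inr h)))))
      · refine Or.inl ⟨Or.inr (Or.inr (Or.inr (Or.inr (Or.inr h)))), ?_⟩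
        rintro (rfl | rfl | rfl | rfl | rfl)
        exacts [ftv h, fvw h, fwx h, fxy h, fyz h]
    · rintro (⟨h1 | h1 | h1 | h1 | h1 | h1, h2⟩ | h | h | h | h | h | h)
      · exact absurd (Or.inl h1) h2
      · exact absurd (Or.inr (Or.inl h1)) h2
      · exact absurd (Or.inr (Or.inr (Or.inl h1))) h2
      · exact absurd (Or.inr (Or.inr (Or.inr (Or.inl h1)))) h2
      · exact absurd (Or.inr (Or.inr (Or.inr (Or.inr h1)))) h2
      · exact Or.inr (Or.inr (Or.inr (Or.inr (Or.inr (Or.inr h1)))))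
      · exact Or.inl h
      · exact Or.inr (Or.inl h)
      · exact Or.inr (Or.inr (Or.inl h))
      · exact Or.inr (Or.inr (Or.inr (Or.inl h)))
      · exact Or.inr (Or.inr (Or.inr (Or.inr (Or.inl h))))
      · exact Or.inr (Or.inr (Or.inr (Or.inr (Or.inr (Or.inl h)))))
end
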